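/- For all m, n ∈ ℕ: I(m,n,0) = 2^{m+n+1}·m!·n!/(m+n+1)!, I(m,n,1) = 2^{m+n+1}·(m−n)·m!·n!/(m+n+2)!, and I(m,n,2) = 2^{m+n+1}·(m² + n² + m + n − 2mn + 2)·m!·n!/(m+n+3)!. -/

import Mathlib

open intervalIntegral

lemma Jrec (m n : ℕ) :
    ((m:ℝ)+1) * ∫ t in (-1:ℝ)..1, (1+t)^m * (1-t)^(n+1) =
    ((n:ℝ)+1) * ∫ t in (-1:ℝ)..1, (1+t)^(m+1) * (1-t)^n := by
  have hu : ∀ x ∈ Set.uIcc (-1:ℝ) 1, HasDerivAt (fun t : ℝ => (1-t)^(n+1))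
      (-(((n:ℝ)+1) * (1-x)^n)) x := by
    intro x _
    have := (((hasDerivAt_id x).const_sub 1).fun_pow (n+1))
    refine this.congr_deriv ?_
    push_cast
    simp [id]
  have hv : ∀ x ∈ Set.uIcc (-1:ℝ) 1, HasDerivAt (fun t : ℝ => (1+t)^(m+1))
      (((m:ℝ)+1) * (1+x)^m) x := by
    intro x _
    have := (((hasDerivAt_id x).const_add 1).fun_pow (m+1))
    refine this.congr_deriv ?_
    push_cast
    simp [id]
  have hu' : IntervalIntegrable (fun x : ℝ => -(((n:ℝ)+1) * (1-x)^n)) MeasureTheory.volume (-1) 1 := by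
    apply Continuous.intervalIntegrable; fun_prop
  have hv' : IntervalIntegrable (fun x : ℝ => ((m:ℝ)+1) * (1+x)^m) MeasureTheory.volume (-1) 1 := by
    apply Continuous.intervalIntegrable; fun_prop
  have key := integral_mul_deriv_eq_deriv_mul hu hv hu' hv'
  have h1 : ∫ x in (-1:ℝ)..1, (1-x)^(n+1) * (((m:ℝ)+1) * (1+x)^m)
      = ((m:ℝ)+1) * ∫ t in (-1:ℝ)..1, (1+t)^m * (1-t)^(n+1) := by
    rw [← integral_const_mul]
    apply integral_congr; intro x _; ring
  have h2 : ∫ x in (-1:ℝ)..1, (-(((n:ℝ)+1) * (1-x)^n)) * (1+x)^(m+1)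
      = -(((n:ℝ)+1) * ∫ t in (-1:ℝ)..1, (1+t)^(m+1) * (1-t)^n) := by
    rw [← integral_const_mul, ← integral_neg]
    apply integral_congr; intro x _; ring
  rw [h1, h2] at key
  rw [key]
  norm_num

lemma Jval : ∀ n m : ℕ, (∫ t in (-1:ℝ)..1, (1+t)^m * (1-t)^n) =
    2 ^ (m + n + 1) * (m.factorial : ℝ) * (n.factorial : ℝ) / ((m + n + 1).factorial : ℝ) := by
  intro n
  induction n with
  | zero =>
    intro m
    have : (∫ t in (-1:ℝ)..1, (1+t)^m * (1-t)^0) = ∫ t in (-1:ℝ)..1, ((1:ℝ)+t)^m := by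
      apply integral_congr; intro x _; simp
    rw [this]
    have h2 : (∫ t in (-1:ℝ)..1, ((1:ℝ)+t)^m) = 2^(m+1)/((m:ℝ)+1) := by
      have := intervalIntegral.integral_comp_add_left (a := (-1:ℝ)) (b := 1)
        (fun x : ℝ => x^m) 1
      rw [this]
      norm_num [integral_pow]
    rw [h2]
    have hf : ((m+0+1).factorial : ℝ) = ((m:ℝ)+1) * (m.factorial : ℝ) := by
      push_cast [Nat.factorial_succ]; ring
    rw [hf]
    have hm : ((m:ℝ)+1) ≠ 0 := by positivity
    have hmf : (m.factorial : ℝ) ≠ 0 := by positivity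
    field_simp
    ring
  | succ n ih =>
    intro m
    have hrec := Jrec m n
    have hm : ((m:ℝ)+1) ≠ 0 := by positivity
    have := ih (m+1)
    rw [this] at hrec
    have heq : (∫ t in (-1:ℝ)..1, (1+t)^m * (1-t)^(n+1)) =
        ((n:ℝ)+1) * (2 ^ (m + 1 + n + 1) * ((m+1).factorial : ℝ) * (n.factorial : ℝ) /
          ((m + 1 + n + 1).factorial : ℝ)) / ((m:ℝ)+1) := by
      field_simp at hrec ⊢
      linarith [hrec]
    rw [heq]
    have e1 : m + 1 + n + 1 = m + (n+1) + 1 := by ring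
    rw [e1]
    have e2 : ((m+1).factorial : ℝ) = ((m:ℝ)+1) * (m.factorial : ℝ) := by
      simp [Nat.factorial_succ]
    have e3 : (((n+1)).factorial : ℝ) = ((n:ℝ)+1) * (n.factorial : ℝ) := by
      simp [Nat.factorial_succ]
    rw [e2, e3]
    have hf : ((m + (n+1) + 1).factorial : ℝ) ≠ 0 := by positivity
    field_simp

/-- explicit evaluation of `I(m,n,k) = ∫_{-1}^1 (1+t)^m (1-t)^n t^k dt`
for `k = 0, 1, 2`. -/
theorem stmt5 (I : ℕ → ℕ → ℕ → ℝ)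
    (hI : ∀ m n k, I m n k = ∫ t in (-1:ℝ)..1, (1 + t) ^ m * (1 - t) ^ n * t ^ k) :
    ∀ m n : ℕ,
      I m n 0 = 2 ^ (m + n + 1) * (m.factorial : ℝ) * (n.factorial : ℝ) /
        ((m + n + 1).factorial : ℝ) ∧
      I m n 1 = 2 ^ (m + n + 1) * ((m : ℝ) - (n : ℝ)) * (m.factorial : ℝ) *
        (n.factorial : ℝ) / ((m + n + 2).factorial : ℝ) ∧
      I m n 2 = 2 ^ (m + n + 1) *
        ((m : ℝ) ^ 2 + (n : ℝ) ^ 2 + (m : ℝ) + (n : ℝ) - 2 * (m : ℝ) * (n : ℝ) + 2) *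
        (m.factorial : ℝ) * (n.factorial : ℝ) / ((m + n + 3).factorial : ℝ) := by
  intro m n
  have hint : ∀ a b : ℕ, IntervalIntegrable (fun t : ℝ => (1+t)^a*(1-t)^b)
      MeasureTheory.volume (-1) 1 := fun a b => by
    apply Continuous.intervalIntegrable; fun_prop
  refine ⟨?_, ?_, ?_⟩
  · rw [hI]
    have h : (∫ t in (-1:ℝ)..1, (1+t)^m*(1-t)^n*t^0)
        = ∫ t in (-1:ℝ)..1, (1+t)^m*(1-t)^n :=
      integral_congr fun x _ => by ring
    rw [h, Jval]
  · rw [hI]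
    have h : (∫ t in (-1:ℝ)..1, (1+t)^m*(1-t)^n*t^1)
        = ((∫ t in (-1:ℝ)..1, (1+t)^(m+1)*(1-t)^n)
          - ∫ t in (-1:ℝ)..1, (1+t)^m*(1-t)^(n+1))/2 := by
      rw [← integral_sub (hint _ _) (hint _ _), ← intervalIntegral.integral_div]
      exact integral_congr fun x _ => by ring
    rw [h, Jval, Jval]
    have e1 : m+1+n+1 = m+n+2 := by omega
    have e2 : m+(n+1)+1 = m+n+2 := by omega
    rw [e1, e2]
    have e3 : ((m+1).factorial : ℝ) = ((m:ℝ)+1) * (m.factorial : ℝ) := by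
      push_cast [Nat.factorial_succ]; ring
    have e4 : ((n+1).factorial : ℝ) = ((n:ℝ)+1) * (n.factorial : ℝ) := by
      push_cast [Nat.factorial_succ]; ring
    rw [e3, e4]
    have hf : ((m+n+2).factorial : ℝ) ≠ 0 := by positivity
    field_simp
    ring
  · rw [hI]
    have h : (∫ t in (-1:ℝ)..1, (1+t)^m*(1-t)^n*t^2)
        = ((∫ t in (-1:ℝ)..1, (1+t)^(m+2)*(1-t)^n)
          - 2 * (∫ t in (-1:ℝ)..1, (1+t)^(m+1)*(1-t)^(n+1))
          + ∫ t in (-1:ℝ)..1, (1+t)^m*(1-t)^(n+2))/4 := by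
      rw [← intervalIntegral.integral_const_mul,
        ← integral_sub (hint _ _) ((hint _ _).const_mul 2),
        ← integral_add ((hint _ _).sub ((hint _ _).const_mul 2)) (hint _ _),
        ← intervalIntegral.integral_div]
      exact integral_congr fun x _ => by ring
    rw [h, Jval, Jval, Jval]
    have e1 : m+2+n+1 = m+n+3 := by omega
    have e2 : m+1+(n+1)+1 = m+n+3 := by omega
    have e3 : m+(n+2)+1 = m+n+3 := by omega
    rw [e1, e2, e3]
    have e4 : ((m+2).factorial : ℝ) = ((m:ℝ)+2) * ((m:ℝ)+1) * (m.factorial : ℝ) := by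
      push_cast [Nat.factorial_succ]; ring
    have e5 : ((n+2).factorial : ℝ) = ((n:ℝ)+2) * ((n:ℝ)+1) * (n.factorial : ℝ) := by
      push_cast [Nat.factorial_succ]; ring
    have e6 : ((m+1).factorial : ℝ) = ((m:ℝ)+1) * (m.factorial : ℝ) := by
      push_cast [Nat.factorial_succ]; ring
    have e7 : ((n+1).factorial : ℝ) = ((n:ℝ)+1) * (n.factorial : ℝ) := by
      push_cast [Nat.factorial_succ]; ring
    rw [e4, e5, e6, e7]
    have hf : ((m+n+3).factorial : ℝ) ≠ 0 := by positivity
    field_simp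
    ring
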